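/- Let δ ≥ 0, p ≥ 0, Ste > 0. For γ > 0 let λ_γ be the unique solution in (0, λ₀) of F(β_γ(λ_γ)) = (√π/Ste)·λ_γ·exp(λ_γ²)·erf(λ_γ), where F(x) = x + (δ/(p+1))·x^(p+1) and β_γ(x) = 1 − (2x·exp(x²))/(γ·Ste). Then γ ↦ λ_γ is strictly increasing: if 0 < γ₁ < γ₂ then λ_{γ₁} < λ_{γ₂}. -/
import Mathlib


open Real

noncomputable def erf (x : ℝ) : ℝ := (2 / Real.sqrt π) * ∫ t in (0:ℝ)..x, Real.exp (-t^2)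

lemma erf_nonneg_aux {x : ℝ} (hx : 0 ≤ x) : 0 ≤ erf x := by
  unfold erf
  apply mul_nonneg
  · positivity
  · exact intervalIntegral.integral_nonneg hx (fun t _ => (Real.exp_pos _).le)

lemma erf_mono_aux {x y : ℝ} (hx : 0 ≤ x) (hxy : x ≤ y) : erf x ≤ erf y := by
  unfold erf
  apply mul_le_mul_of_nonneg_left _ (by positivity)
  have hint : ∀ a b : ℝ, IntervalIntegrable (fun t => Real.exp (-t^2)) MeasureTheory.volume a b :=
    fun a b => (Continuous.intervalIntegrable (by continuity) a b)
  have := intervalIntegral.integral_add_adjacent_intervals (hint 0 x) (hint x y)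
  rw [← this]
  have : 0 ≤ ∫ t in x..y, Real.exp (-t^2) :=
    intervalIntegral.integral_nonneg hxy (fun t _ => (Real.exp_pos _).le)
  linarith

/-- γ ↦ λ_γ is strictly increasing: if 0 < γ₁ < γ₂ then λ_{γ₁} < λ_{γ₂}. -/
theorem lambda_gamma_strictMono (δ p Ste γ₁ γ₂ l₁ l₂ : ℝ) (hδ : 0 ≤ δ) (hp : 0 ≤ p)
    (hSte : 0 < Ste) (hγ₁ : 0 < γ₁) (hγ₁₂ : γ₁ < γ₂)
    (hl₁ : 0 < l₁) (hl₂ : 0 < l₂)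
    (hβ₁ : 0 ≤ 1 - (2 * l₁ * Real.exp (l₁^2)) / (γ₁ * Ste))
    (hβ₂ : 0 ≤ 1 - (2 * l₂ * Real.exp (l₂^2)) / (γ₂ * Ste))
    (heq₁ : (1 - (2 * l₁ * Real.exp (l₁^2)) / (γ₁ * Ste)) +
        (δ / (p + 1)) * (1 - (2 * l₁ * Real.exp (l₁^2)) / (γ₁ * Ste)) ^ (p + 1) =
      (Real.sqrt π / Ste) * (l₁ * Real.exp (l₁^2) * erf l₁))
    (heq₂ : (1 - (2 * l₂ * Real.exp (l₂^2)) / (γ₂ * Ste)) +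
        (δ / (p + 1)) * (1 - (2 * l₂ * Real.exp (l₂^2)) / (γ₂ * Ste)) ^ (p + 1) =
      (Real.sqrt π / Ste) * (l₂ * Real.exp (l₂^2) * erf l₂)) :
    l₁ < l₂ := by
  by_contra h
  push_neg at h  -- h : l₂ ≤ l₁
  set a := 1 - (2 * l₁ * Real.exp (l₁^2)) / (γ₁ * Ste) with ha
  set b := 1 - (2 * l₂ * Real.exp (l₂^2)) / (γ₂ * Ste) with hb
  clear_value a b
  -- l₂ * exp(l₂²) ≤ l₁ * exp(l₁²)
  have hmono : l₂ * Real.exp (l₂^2) ≤ l₁ * Real.exp (l₁^2) := by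
    apply mul_le_mul h (Real.exp_le_exp.2 (by nlinarith)) (Real.exp_pos _).le hl₁.le
  have hab : a < b := by
    have h1 : (2 * l₂ * Real.exp (l₂^2)) / (γ₂ * Ste) <
        (2 * l₂ * Real.exp (l₂^2)) / (γ₁ * Ste) := by
      apply div_lt_div_of_pos_left (by positivity) (by positivity)
      nlinarith
    have h2 : (2 * l₂ * Real.exp (l₂^2)) / (γ₁ * Ste) ≤
        (2 * l₁ * Real.exp (l₁^2)) / (γ₁ * Ste) := by
      apply div_le_div_of_nonneg_right _ (by positivity)
      nlinarith
    rw [ha, hb]; linarith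
  -- F strictly monotone
  have hF : a + (δ / (p + 1)) * a ^ (p + 1) < b + (δ / (p + 1)) * b ^ (p + 1) := by
    have hc : 0 ≤ δ / (p + 1) := by positivity
    have : a ^ (p + 1) ≤ b ^ (p + 1) :=
      Real.rpow_le_rpow hβ₁ hab.le (by linarith)
    have := mul_le_mul_of_nonneg_left this hc
    linarith
  -- RHS monotone
  have hRHS : (Real.sqrt π / Ste) * (l₂ * Real.exp (l₂^2) * erf l₂) ≤
      (Real.sqrt π / Ste) * (l₁ * Real.exp (l₁^2) * erf l₁) := by
    apply mul_le_mul_of_nonneg_left _ (by positivity)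
    apply mul_le_mul hmono (erf_mono_aux hl₂.le h) (erf_nonneg_aux hl₂.le) (by positivity)
  rw [← heq₁, ← heq₂] at hRHS
  linarith
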